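/- arXiv:1106.4354 — 6 statements merged into one kernel-verified Lean document; each statement's English description precedes it below -/
import Mathlib

section
/- Consider a short exact sequence 0 → M → E → K → 0 of finite dimensional modules over A = K[t]/(t^p), with K the trivial one-dimensional module. The sequence splits if and only if the Jordan type of E equals the Jordan type of M plus one extra block [1]. -/
/-- Index type for the canonical Jordan-form model over `k[t]/(t^p)`:
a block of size `i+1` (so sizes `1,…,p`), a copy index below the multiplicity
`a (i+1)`, and a position inside the block. -/
abbrev JordanIdx (p : ℕ) (a : ℕ → ℕ) : Type :=
  Σ i : Fin p, Fin (a ((i : ℕ) + 1)) × Fin ((i : ℕ) + 1)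

/-- Carrier of the canonical Jordan model with block multiplicities `a`. -/
abbrev JordanCarrier (k : Type*) (p : ℕ) (a : ℕ → ℕ) : Type _ := JordanIdx p a → k

/-- The shift operator (multiplication by `t`) on the canonical Jordan model. -/
def jordanShift (k : Type*) [Field k] (p : ℕ) (a : ℕ → ℕ) :
    JordanCarrier k p a →ₗ[k] JordanCarrier k p a where
  toFun g x :=
    if h : (x.2.2 : ℕ) + 1 < (x.1 : ℕ) + 1 then g ⟨x.1, x.2.1, ⟨(x.2.2 : ℕ) + 1, h⟩⟩ else 0
  map_add' g₁ g₂ := by funext x; dsimp; split <;> simp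
  map_smul' c g := by funext x; dsimp; split <;> simp

/-- A `p`-nilpotent endomorphism `f` of `V` gives `V` the structure of a
`k[t]/(t^p)`-module; it has Jordan type `∑ᵢ a i [i]` if `(V, f)` is isomorphic
to the canonical Jordan model with multiplicities `a`. -/
def HasJordanType {k V : Type*} [Field k] [AddCommGroup V] [Module k V]
    (p : ℕ) (f : V →ₗ[k] V) (a : ℕ → ℕ) : Prop :=
  ∃ e : V ≃ₗ[k] JordanCarrier k p a, ∀ v, e (f v) = jordanShift k p a (e v)

section Aux

variable {k : Type*} [Field k] {p : ℕ} {a : ℕ → ℕ}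

lemma mem_ker_jordanShift {g : JordanCarrier k p a} :
    g ∈ LinearMap.ker (jordanShift k p a) ↔
      ∀ x : JordanIdx p a, (x.2.2 : ℕ) ≠ 0 → g x = 0 := by
  rw [LinearMap.mem_ker]
  constructor
  · intro hg x hx
    obtain ⟨i, c, j⟩ := x
    dsimp only at hx
    have hj2 := j.isLt
    have hlt : ((j : ℕ) - 1) + 1 < (i : ℕ) + 1 := by omega
    have h0 := congrFun hg ⟨i, c, ⟨(j : ℕ) - 1, by omega⟩⟩
    simp only [jordanShift, LinearMap.coe_mk, AddHom.coe_mk, Pi.zero_apply] at h0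
    rw [dif_pos hlt] at h0
    have hj : (⟨(j : ℕ) - 1 + 1, hlt⟩ : Fin ((i : ℕ) + 1)) = j := by
      apply Fin.ext; simp; omega
    rwa [hj] at h0
  · intro hg
    funext x
    simp only [jordanShift, LinearMap.coe_mk, AddHom.coe_mk, Pi.zero_apply]
    split
    · exact hg _ (by simp)
    · rfl

lemma finrank_ker_jordanShift (k : Type*) [Field k] (p : ℕ) (a : ℕ → ℕ) :
    Module.finrank k (LinearMap.ker (jordanShift k p a)) = ∑ i : Fin p, a ((i : ℕ) + 1) := by
  let R : (LinearMap.ker (jordanShift k p a)) →ₗ[k] ((Σ i : Fin p, Fin (a ((i : ℕ) + 1))) → k) :=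
    { toFun := fun g x => (g : JordanCarrier k p a) ⟨x.1, x.2, ⟨0, Nat.succ_pos _⟩⟩
      map_add' := fun _ _ => rfl
      map_smul' := fun _ _ => rfl }
  have hbij : Function.Bijective R := by
    constructor
    · intro g g' h
      ext x
      obtain ⟨i, c, j⟩ := x
      by_cases hj : (j : ℕ) = 0
      · have hj' : j = ⟨0, Nat.succ_pos _⟩ := Fin.ext hj
        subst hj'
        exact congrFun h ⟨i, c⟩
      · rw [mem_ker_jordanShift.mp g.2 ⟨i, c, j⟩ hj,
          mem_ker_jordanShift.mp g'.2 ⟨i, c, j⟩ hj]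
    · intro h
      refine ⟨⟨fun x => if (x.2.2 : ℕ) = 0 then h ⟨x.1, x.2.1⟩ else 0, ?_⟩, ?_⟩
      · exact mem_ker_jordanShift.mpr fun x hx => if_neg hx
      · funext x
        simp [R]
  rw [(LinearEquiv.ofBijective R hbij).finrank_eq, Module.finrank_fintype_fun_eq_card,
    Fintype.card_sigma]
  simp

lemma finrank_ker_of_hasJordanType {V : Type*} [AddCommGroup V] [Module k V]
    {f : V →ₗ[k] V} (h : HasJordanType p f a) :
    Module.finrank k (LinearMap.ker f) = ∑ i : Fin p, a ((i : ℕ) + 1) := by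
  obtain ⟨e, he⟩ := h
  have hmap : Submodule.map (e : V →ₗ[k] JordanCarrier k p a) (LinearMap.ker f)
      = LinearMap.ker (jordanShift k p a) := by
    ext g
    simp only [Submodule.mem_map, LinearMap.mem_ker, LinearEquiv.coe_coe]
    constructor
    · rintro ⟨v, hv, rfl⟩
      rw [← he, hv, map_zero]
    · intro hg
      refine ⟨e.symm g, ?_, by simp⟩
      have h2 : e (f (e.symm g)) = 0 := by
        rw [he, e.apply_symm_apply, hg]
      exact e.injective (by simpa using h2)
  rw [← finrank_ker_jordanShift k p a, ← hmap, LinearEquiv.finrank_map_eq]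

end Aux

section Extend

variable (k : Type*) [Field k] (p : ℕ) (a : ℕ → ℕ)

/-- Adding one extra block of size 1 to the Jordan model. -/
def extendEquiv (hp : 0 < p) :
    (JordanCarrier k p a × k) ≃ₗ[k]
      JordanCarrier k p (fun i => if i = 1 then a 1 + 1 else a i) where
  toFun gc x :=
    if h : (x.2.1 : ℕ) < a ((x.1 : ℕ) + 1) then gc.1 ⟨x.1, ⟨x.2.1, h⟩, x.2.2⟩ else gc.2
  map_add' u v := by
    funext x
    by_cases h : (x.2.1 : ℕ) < a ((x.1 : ℕ) + 1)
    · simp [h]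
    · simp [h]
  map_smul' c u := by
    funext x
    by_cases h : (x.2.1 : ℕ) < a ((x.1 : ℕ) + 1)
    · simp [h]
    · simp [h]
  invFun g :=
    (fun x => g ⟨x.1, ⟨(x.2.1 : ℕ), by
        have hlt := x.2.1.isLt
        dsimp only
        split_ifs with h
        · have h2 : a ((x.1 : ℕ) + 1) = a 1 := by rw [h]
          omega
        · exact hlt⟩, x.2.2⟩,
      g ⟨⟨0, hp⟩, ⟨a 1, by simp⟩, ⟨0, Nat.succ_pos _⟩⟩)
  left_inv gc := by
    refine Prod.ext ?_ ?_
    · funext x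
      show (if h : _ then _ else _) = _
      rw [dif_pos x.2.1.isLt]
    · show (if h : _ then _ else _) = _
      rw [dif_neg (by simp)]
  right_inv g := by
    funext x
    obtain ⟨⟨i, hi⟩, ⟨c, hc⟩, ⟨j, hj⟩⟩ := x
    have hc' : c < if i + 1 = 1 then a 1 + 1 else a (i + 1) := hc
    show (if h : _ then _ else _) = _
    by_cases h : c < a (i + 1)
    · rw [dif_pos h]
    · rw [dif_neg h]
      have hi0 : i = 0 := by
        by_contra h0
        rw [if_neg (by omega)] at hc'
        exact h hc'
      subst hi0
      rw [if_pos rfl] at hc'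
      have ha01 : a (0 + 1) = a 1 := rfl
      have hc1 : c = a 1 := by omega
      have hj2 : j < 0 + 1 := hj
      have hj' : j = 0 := by omega
      subst hc1; subst hj'
      rfl

lemma extendEquiv_shift (hp : 0 < p) (g : JordanCarrier k p a) (c : k) :
    jordanShift k p (fun i => if i = 1 then a 1 + 1 else a i)
        (extendEquiv k p a hp (g, c))
      = extendEquiv k p a hp (jordanShift k p a g, 0) := by
  funext x
  obtain ⟨⟨i, hi⟩, ⟨cc, hcc⟩, ⟨j, hj⟩⟩ := x
  have hcc' : cc < if i + 1 = 1 then a 1 + 1 else a (i + 1) := hcc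
  show (if h1 : j + 1 < i + 1 then
          (if h2 : cc < a (i + 1) then g ⟨⟨i, hi⟩, ⟨cc, h2⟩, ⟨j + 1, h1⟩⟩ else c)
        else 0)
      = (if h2 : cc < a (i + 1) then
          (if h1 : j + 1 < i + 1 then g ⟨⟨i, hi⟩, ⟨cc, h2⟩, ⟨j + 1, h1⟩⟩ else 0)
        else (0 : k))
  by_cases h1 : j + 1 < i + 1 <;> by_cases h2 : cc < a (i + 1)
  · rw [dif_pos h1, dif_pos h2, dif_pos h2, dif_pos h1]
  · exfalso
    have hi0 : i = 0 := by
      by_contra h0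
      rw [if_neg (by omega)] at hcc'
      exact h2 hcc'
    omega
  · rw [dif_neg h1, dif_pos h2, dif_neg h1]
  · rw [dif_neg h1, dif_neg h2]

end Extend

/-- a short exact sequence `0 → M → E → K → 0` of finite dimensional
modules over `A = K[t]/(t^p)` (with `K` the trivial one-dimensional module)
splits iff the Jordan type of `E` equals the Jordan type of `M` plus one
extra block `[1]`. -/
theorem statement3 {K M E : Type*} [Field K]
    [AddCommGroup M] [Module K M] [FiniteDimensional K M]
    [AddCommGroup E] [Module K E] [FiniteDimensional K E]
    {p : ℕ} (hp : p.Prime) [CharP K p]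
    (fM : M →ₗ[K] M) (fE : E →ₗ[K] E) (hfM : fM ^ p = 0) (hfE : fE ^ p = 0)
    (φ : M →ₗ[K] E) (hφ : Function.Injective φ) (hφf : fE.comp φ = φ.comp fM)
    (ψ : E →ₗ[K] K) (hψ : Function.Surjective ψ) (hψf : ψ.comp fE = 0)
    (hex : LinearMap.range φ = LinearMap.ker ψ)
    (a : ℕ → ℕ) (ha : HasJordanType p fM a) :
    (∃ s : K →ₗ[K] E, ψ.comp s = LinearMap.id ∧ fE.comp s = 0) ↔
      HasJordanType p fE (fun i => if i = 1 then a 1 + 1 else a i) := by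
  have hp0 : 0 < p := hp.pos
  have hψφ : ∀ m, ψ (φ m) = 0 := by
    intro m
    have : φ m ∈ LinearMap.ker ψ := hex ▸ LinearMap.mem_range_self φ m
    exact LinearMap.mem_ker.mp this
  have hfEφ : ∀ m, fE (φ m) = φ (fM m) := fun m => LinearMap.ext_iff.mp hφf m
  constructor
  · rintro ⟨s, hs1, hs2⟩
    obtain ⟨e, he⟩ := ha
    have hψs : ∀ c, ψ (s c) = c := fun c => LinearMap.ext_iff.mp hs1 c
    have hfEs : ∀ c, fE (s c) = 0 := fun c => LinearMap.ext_iff.mp hs2 c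
    let Φ : (M × K) →ₗ[K] E := φ.comp (LinearMap.fst K M K) + s.comp (LinearMap.snd K M K)
    have hΦ : ∀ u : M × K, Φ u = φ u.1 + s u.2 := fun u => rfl
    have hΦbij : Function.Bijective Φ := by
      constructor
      · rintro ⟨m, c⟩ ⟨m', c'⟩ h
        rw [hΦ, hΦ] at h
        have hcc : c = c' := by
          have h2 := congrArg ψ h
          simp only [map_add, hψφ, hψs, zero_add] at h2
          exact h2
        subst hcc
        have hmm : φ m = φ m' := by
          have := add_right_cancel h
          exact this
        exact Prod.ext (hφ hmm) rfl
      · intro v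
        have hker : v - s (ψ v) ∈ LinearMap.ker ψ := by
          rw [LinearMap.mem_ker, map_sub, hψs, sub_self]
        rw [← hex] at hker
        obtain ⟨m, hm⟩ := hker
        exact ⟨(m, ψ v), by rw [hΦ]; simp [hm]⟩
    let Φe : (M × K) ≃ₗ[K] E := LinearEquiv.ofBijective Φ hΦbij
    have hΦe : ∀ u : M × K, Φe u = φ u.1 + s u.2 := fun u => rfl
    have hfEΦ : ∀ u : M × K, fE (Φe u) = Φe (fM u.1, 0) := by
      intro u
      rw [hΦe, hΦe, map_add, hfEφ, hfEs, map_zero, add_zero]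
    let e' : E ≃ₗ[K] JordanCarrier K p (fun i => if i = 1 then a 1 + 1 else a i) :=
      Φe.symm.trans ((e.prodCongr (LinearEquiv.refl K K)).trans (extendEquiv K p a hp0))
    refine ⟨e', fun v => ?_⟩
    obtain ⟨u, rfl⟩ := Φe.surjective v
    have h1 : e' (fE (Φe u)) = extendEquiv K p a hp0 (e (fM u.1), 0) := by
      rw [hfEΦ]
      simp [e', LinearEquiv.trans_apply]
    have h2 : e' (Φe u) = extendEquiv K p a hp0 (e u.1, u.2) := by
      simp [e', LinearEquiv.trans_apply]
    rw [h1, h2, he, ← extendEquiv_shift]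
  · intro hE
    have hM := finrank_ker_of_hasJordanType ha
    have hEker := finrank_ker_of_hasJordanType hE
    have hsum : ∑ i : Fin p, (fun i => if i = 1 then a 1 + 1 else a i) ((i : ℕ) + 1)
        = (∑ i : Fin p, a ((i : ℕ) + 1)) + 1 := by
      have hterm : ∀ i : Fin p, (fun i => if i = 1 then a 1 + 1 else a i) ((i : ℕ) + 1)
          = a ((i : ℕ) + 1) + (if i = (⟨0, hp0⟩ : Fin p) then 1 else 0) := by
        intro i
        by_cases h : (i : ℕ) = 0
        · have hi : i = (⟨0, hp0⟩ : Fin p) := Fin.ext h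
          subst hi
          simp
        · have h2 : ¬ i = (⟨0, hp0⟩ : Fin p) := fun hh => h (by rw [hh])
          show (if (i : ℕ) + 1 = 1 then a 1 + 1 else a ((i : ℕ) + 1)) = _
          rw [if_neg (by omega), if_neg h2, add_zero]
      rw [Finset.sum_congr rfl fun i _ => hterm i, Finset.sum_add_distrib,
        Finset.sum_ite_eq' Finset.univ (⟨0, hp0⟩ : Fin p) (fun _ => 1)]
      simp
    rw [hsum] at hEker
    have hnot : ¬ LinearMap.ker fE ≤ LinearMap.range φ := by
      intro hle
      have hsub : LinearMap.ker fE ≤ Submodule.map φ (LinearMap.ker fM) := by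
        intro x hx
        obtain ⟨m, rfl⟩ := hle hx
        have hker : fM m = 0 := by
          apply hφ
          rw [map_zero, ← hfEφ]
          exact LinearMap.mem_ker.mp hx
        exact ⟨m, LinearMap.mem_ker.mpr hker, rfl⟩
      have hle2 := Submodule.finrank_mono hsub
      rw [hEker, ((LinearMap.ker fM).equivMapOfInjective φ hφ).symm.finrank_eq, hM] at hle2
      omega
    obtain ⟨v, hv1, hv2⟩ := SetLike.not_le_iff_exists.mp hnot
    have hψv : ψ v ≠ 0 := by
      intro h0
      exact hv2 (hex ▸ LinearMap.mem_ker.mpr h0)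
    refine ⟨LinearMap.toSpanSingleton K E ((ψ v)⁻¹ • v), ?_, ?_⟩
    · ext c
      simp [LinearMap.toSpanSingleton_apply, map_smul, smul_eq_mul,
        inv_mul_cancel₀ hψv]
    · ext c
      simp [LinearMap.toSpanSingleton_apply, map_smul, LinearMap.mem_ker.mp hv1]
end

section
/- For p ≥ 5, let a = 3[2], b = [3] + 3[1], c = [2] be Jordan types (partitions) regarded as modules over the restricted enveloping algebra of a one-dimensional Lie algebra, with tensor product of Jordan types given by the Clebsch–Gordan rule modulo p. Then rank(t on a) = 3 > rank(t on b) = 2, while a ⊗ c = 3[3] + 3[1] and b ⊗ c = [4] + 4[2], so rank(t on a⊗c) = 6 < rank(t on b⊗c) = 7. In particular, a ≥ b in rank of t does not imply rank(t on a⊗c) ≥ rank(t on b⊗c). -/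
/-- Rank of `t` on a Jordan type `∑ᵢ a i [i]` (parts of size `1,…,p`):
`∑_{i≥2} a i * (i-1)`. -/
def rkOne (p : ℕ) (a : ℕ → ℕ) : ℕ := ∑ i ∈ Finset.Icc 1 p, a i * (i - 1)

/-- Multiplicity of the block `[l]` in `[m] ⊗ [n]` according to the
Clebsch–Gordan rule: `[m] ⊗ [n] = [n+m-1] + [n+m-3] + ⋯ + [|n-m|+1]`
(valid for `m + n ≤ p + 1`). -/
def cgBlock (m n l : ℕ) : ℕ :=
  if max m n - min m n + 1 ≤ l ∧ l ≤ m + n - 1 ∧ (l + m + n) % 2 = 1 then 1 else 0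

/-- Tensor product of Jordan types, extended bilinearly from the
Clebsch–Gordan rule for single blocks. -/
def cgTensor (p : ℕ) (a b : ℕ → ℕ) : ℕ → ℕ :=
  fun l => ∑ m ∈ Finset.Icc 1 p, ∑ n ∈ Finset.Icc 1 p, a m * b n * cgBlock m n l

/-- for `p ≥ 5`, with Jordan types `a = 3[2]`, `b = [3] + 3[1]`,
`c = [2]`, one has `rank(t,a) = 3 > 2 = rank(t,b)`, while
`a ⊗ c = 3[3] + 3[1]` and `b ⊗ c = [4] + 4[2]` (Clebsch–Gordan), so
`rank(t, a⊗c) = 6 < 7 = rank(t, b⊗c)`. -/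
theorem statement5 (p : ℕ) (hp : p.Prime) (hp5 : 5 ≤ p)
    (a b c : ℕ → ℕ)
    (ha : a = fun i => if i = 2 then 3 else 0)
    (hb : b = fun i => if i = 3 then 1 else if i = 1 then 3 else 0)
    (hc : c = fun i => if i = 2 then 1 else 0) :
    rkOne p a = 3 ∧ rkOne p b = 2 ∧
    (∀ l ∈ Finset.Icc 1 p,
      cgTensor p a c l = (fun i => if i = 3 then 3 else if i = 1 then 3 else 0 : ℕ → ℕ) l) ∧
    (∀ l ∈ Finset.Icc 1 p,
      cgTensor p b c l = (fun i => if i = 4 then 1 else if i = 2 then 4 else 0 : ℕ → ℕ) l) ∧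
    rkOne p (cgTensor p a c) = 6 ∧ rkOne p (cgTensor p b c) = 7 := by
  subst ha hb hc
  have h1 : (1:ℕ) ∈ Finset.Icc 1 p := by simp; omega
  have h2 : (2:ℕ) ∈ Finset.Icc 1 p := by simp; omega
  have h3 : (3:ℕ) ∈ Finset.Icc 1 p := by simp; omega
  have h4 : (4:ℕ) ∈ Finset.Icc 1 p := by simp; omega
  -- collapse tensor sums
  have hac : ∀ l, cgTensor p (fun i => if i = 2 then 3 else 0)
      (fun i => if i = 2 then 1 else 0) l = 3 * cgBlock 2 2 l := by
    intro l
    simp only [cgTensor]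
    rw [Finset.sum_eq_single_of_mem 2 h2]
    · rw [Finset.sum_eq_single_of_mem 2 h2]
      · simp
      · intro n _ hn; simp [hn]
    · intro m _ hm; simp [hm]
  have hbc : ∀ l, cgTensor p (fun i => if i = 3 then 1 else if i = 1 then 3 else 0)
      (fun i => if i = 2 then 1 else 0) l = cgBlock 3 2 l + 3 * cgBlock 1 2 l := by
    intro l
    simp only [cgTensor]
    have hin : ∀ m, (∑ n ∈ Finset.Icc 1 p,
        (if m = 3 then 1 else if m = 1 then 3 else 0) * (if n = 2 then 1 else 0)
          * cgBlock m n l)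
        = (if m = 3 then 1 else if m = 1 then 3 else 0) * cgBlock m 2 l := by
      intro m
      rw [Finset.sum_eq_single_of_mem 2 h2]
      · simp
      · intro n _ hn; simp [hn]
    rw [Finset.sum_congr rfl (fun m _ => hin m)]
    have hsplit : ∀ m : ℕ, (if m = 3 then 1 else if m = 1 then 3 else 0) * cgBlock m 2 l
        = (if m = 3 then cgBlock 3 2 l else 0) + (if m = 1 then 3 * cgBlock 1 2 l else 0) := by
      intro m
      by_cases hm3 : m = 3
      · subst hm3; simp
      · by_cases hm1 : m = 1
        · subst hm1; simp
        · simp [hm3, hm1]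
    rw [Finset.sum_congr rfl (fun m _ => hsplit m), Finset.sum_add_distrib,
      Finset.sum_ite_eq' _ 3, Finset.sum_ite_eq' _ 1, if_pos h3, if_pos h1]
  -- pointwise identification on Icc 1 p
  have hacl : ∀ l ∈ Finset.Icc 1 p,
      cgTensor p (fun i => if i = 2 then 3 else 0) (fun i => if i = 2 then 1 else 0) l
        = (fun i => if i = 3 then 3 else if i = 1 then 3 else 0 : ℕ → ℕ) l := by
    intro l hl
    rw [hac l]
    simp only [cgBlock]
    simp only [Finset.mem_Icc] at hl
    split_ifs <;> omega
  have hbcl : ∀ l ∈ Finset.Icc 1 p,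
      cgTensor p (fun i => if i = 3 then 1 else if i = 1 then 3 else 0)
        (fun i => if i = 2 then 1 else 0) l
        = (fun i => if i = 4 then 1 else if i = 2 then 4 else 0 : ℕ → ℕ) l := by
    intro l hl
    rw [hbc l]
    simp only [cgBlock]
    simp only [Finset.mem_Icc] at hl
    split_ifs <;> omega
  refine ⟨?_, ?_, hacl, hbcl, ?_, ?_⟩
  · simp only [rkOne]
    rw [Finset.sum_eq_single_of_mem 2 h2]
    · simp
    · intro i _ hi; simp [hi]
  · simp only [rkOne]
    have : ∀ i : ℕ, (if i = 3 then 1 else if i = 1 then 3 else 0) * (i - 1)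
        = if i = 3 then 2 else 0 := by
      intro i
      by_cases hi3 : i = 3
      · subst hi3; simp
      · by_cases hi1 : i = 1
        · subst hi1; simp
        · simp [hi3, hi1]
    rw [Finset.sum_congr rfl (fun i _ => this i)]
    rw [Finset.sum_ite_eq' _ 3, if_pos h3]
  · simp only [rkOne]
    rw [Finset.sum_congr rfl (fun i hi => by rw [hacl i hi])]
    have : ∀ i : ℕ, (if i = 3 then 3 else if i = 1 then 3 else 0) * (i - 1)
        = if i = 3 then 6 else 0 := by
      intro i
      by_cases hi3 : i = 3
      · subst hi3; simp
      · by_cases hi1 : i = 1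
        · subst hi1; simp
        · simp [hi3, hi1]
    rw [Finset.sum_congr rfl (fun i _ => this i)]
    rw [Finset.sum_ite_eq' _ 3, if_pos h3]
  · simp only [rkOne]
    rw [Finset.sum_congr rfl (fun i hi => by rw [hbcl i hi])]
    have : ∀ i : ℕ, (if i = 4 then 1 else if i = 2 then 4 else 0) * (i - 1)
        = (if i = 4 then 3 else 0) + (if i = 2 then 4 else 0) := by
      intro i
      by_cases hi4 : i = 4
      · subst hi4; simp
      · by_cases hi2 : i = 2
        · subst hi2; simp
        · simp [hi4, hi2]
    rw [Finset.sum_congr rfl (fun i _ => this i), Finset.sum_add_distrib,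
      Finset.sum_ite_eq' _ 4, Finset.sum_ite_eq' _ 2, if_pos h4, if_pos h2]
end

section
/- Let M be a finite dimensional k[t]/(t^p)-module of dimension m. If every Jordan block of M has size p (i.e. M is free, of Jordan type m' [p] with m = p·m'), then for every other module N of dimension m whose Jordan type is not m'[p], and for every j with 1 ≤ j < p, rank(t^j on M) > rank(t^j on N). -/
section Aux

variable {k : Type*} [Field k]

lemma shift_pow_apply (p : ℕ) (a : ℕ → ℕ) (j : ℕ) (g : JordanCarrier k p a) (x : JordanIdx p a) :
    ((jordanShift k p a ^ j) g) x =
      if h : (x.2.2 : ℕ) + j ≤ (x.1 : ℕ) then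
        g ⟨x.1, x.2.1, ⟨(x.2.2 : ℕ) + j, by omega⟩⟩ else 0 := by
  induction j generalizing g with
  | zero =>
    obtain ⟨i, c, s⟩ := x
    rw [pow_zero]
    rw [dif_pos (by omega)]
    simp
  | succ j ih =>
    obtain ⟨i, c, s⟩ := x
    dsimp only
    rw [pow_succ, Module.End.mul_apply, ih]
    by_cases h1 : (s : ℕ) + j ≤ (i : ℕ)
    · rw [dif_pos h1]
      show (if h : (s : ℕ) + j + 1 < (i : ℕ) + 1 then _ else 0) = _
      by_cases h2 : (s : ℕ) + (j + 1) ≤ (i : ℕ)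
      · rw [dif_pos (by omega : (s:ℕ) + j + 1 < (i:ℕ) + 1), dif_pos h2]
        rfl
      · rw [dif_neg (by omega), dif_neg h2]
    · rw [dif_neg h1, dif_neg (by omega)]

def extZero {ι : Type*} (P : ι → Prop) [DecidablePred P] :
    ({x // P x} → k) →ₗ[k] (ι → k) where
  toFun h x := if hx : P x then h ⟨x, hx⟩ else 0
  map_add' h₁ h₂ := by funext x; dsimp; split <;> simp
  map_smul' c h := by funext x; dsimp; split <;> simp

lemma extZero_inj {ι : Type*} (P : ι → Prop) [DecidablePred P] :
    Function.Injective (extZero (k := k) P) := by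
  intro h₁ h₂ he
  funext y
  have := congrFun he y.1
  simpa [extZero, y.2] using this

lemma count_fin (n j : ℕ) :
    (∑ s : Fin n, if (s : ℕ) + j < n then (1 : ℕ) else 0) = n - j := by
  rw [Fin.sum_univ_eq_sum_range (fun s => if s + j < n then (1:ℕ) else 0)]
  rw [← Finset.card_filter]
  have : Finset.filter (fun s => s + j < n) (Finset.range n) = Finset.range (n - j) := by
    ext s; simp; omega
  rw [this, Finset.card_range]

lemma range_shift_pow_finrank (p : ℕ) (a : ℕ → ℕ) (j : ℕ) :
    Module.finrank k (LinearMap.range (jordanShift k p a ^ j)) =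
      ∑ i : Fin p, a ((i : ℕ) + 1) * (((i : ℕ) + 1) - j) := by
  classical
  set P : JordanIdx p a → Prop := fun x => (x.2.2 : ℕ) + j ≤ (x.1 : ℕ) with hP
  let τ : {x : JordanIdx p a // P x} → JordanIdx p a := fun y =>
    ⟨y.1.1, y.1.2.1, ⟨(y.1.2.2 : ℕ) + j, by have := y.2; omega⟩⟩
  have hτ : Function.Injective τ := by
    rintro ⟨⟨i₁, c₁, s₁⟩, h₁⟩ ⟨⟨i₂, c₂, s₂⟩, h₂⟩ h
    simp only [τ, Sigma.mk.inj_iff] at h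
    obtain ⟨rfl, h⟩ := h
    simp only [heq_eq_eq, Prod.mk.injEq] at h
    obtain ⟨rfl, h⟩ := h
    rw [Fin.mk.injEq] at h
    have hs : (s₁ : ℕ) = s₂ := by omega
    apply Subtype.ext
    simp [Prod.ext_iff, Fin.ext_iff, hs]
  have hcomp : (jordanShift k p a ^ j) = (extZero P).comp (LinearMap.funLeft k k τ) := by
    apply LinearMap.ext; intro g; funext x
    rw [shift_pow_apply]
    simp only [LinearMap.comp_apply, extZero, LinearMap.coe_mk, AddHom.coe_mk,
      LinearMap.funLeft_apply]
    rfl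
  rw [hcomp, LinearMap.range_comp_of_range_eq_top (extZero P)
    (LinearMap.range_eq_top.2 (LinearMap.funLeft_surjective_of_injective k k τ hτ)),
    LinearMap.finrank_range_of_inj (extZero_inj P),
    Module.finrank_fintype_fun_eq_card]
  rw [Fintype.card_subtype, Finset.card_filter, ← Finset.univ_sigma_univ, Finset.sum_sigma]
  refine Finset.sum_congr rfl fun i _ => ?_
  rw [Fintype.sum_prod_type]
  have hinner : ∀ c : Fin (a ((i : ℕ) + 1)),
      (∑ s : Fin ((i : ℕ) + 1), if P ⟨i, (c, s)⟩ then (1:ℕ) else 0) = ((i : ℕ) + 1) - j := by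
    intro c
    rw [← count_fin ((i : ℕ) + 1) j]
    exact Finset.sum_congr rfl fun s _ => by simp only [hP]; congr 1; simp [Nat.lt_succ_iff]
  rw [Finset.sum_congr rfl fun c _ => hinner c, Finset.sum_const, Finset.card_univ,
    Fintype.card_fin, smul_eq_mul]

lemma finrank_carrier (p : ℕ) (a : ℕ → ℕ) :
    Module.finrank k (JordanCarrier k p a) = ∑ i : Fin p, a ((i : ℕ) + 1) * ((i : ℕ) + 1) := by
  rw [Module.finrank_fintype_fun_eq_card, Fintype.card_sigma]
  simp

lemma hjt_finrank {V : Type*} [AddCommGroup V] [Module k V] {p : ℕ} {f : V →ₗ[k] V} {a : ℕ → ℕ}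
    (h : HasJordanType p f a) :
    Module.finrank k V = ∑ i : Fin p, a ((i : ℕ) + 1) * ((i : ℕ) + 1) := by
  obtain ⟨e, -⟩ := h
  rw [e.finrank_eq, finrank_carrier]

lemma hjt_rank {V : Type*} [AddCommGroup V] [Module k V] {p : ℕ} {f : V →ₗ[k] V} {a : ℕ → ℕ}
    (h : HasJordanType p f a) (j : ℕ) :
    Module.finrank k (LinearMap.range (f ^ j)) =
      ∑ i : Fin p, a ((i : ℕ) + 1) * (((i : ℕ) + 1) - j) := by
  obtain ⟨e, he⟩ := h
  have hpow : ∀ v, e ((f ^ j) v) = (jordanShift k p a ^ j) (e v) := by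
    induction j with
    | zero => intro v; simp
    | succ n ih =>
      intro v
      rw [pow_succ, Module.End.mul_apply, ih, he, pow_succ, Module.End.mul_apply]
  have hcomp : (jordanShift k p a ^ j) =
      (e.toLinearMap.comp (f ^ j)).comp e.symm.toLinearMap := by
    apply LinearMap.ext; intro w
    simp only [LinearMap.comp_apply, LinearEquiv.coe_coe]
    rw [hpow, e.apply_symm_apply]
  rw [← range_shift_pow_finrank (k := k) p a j, hcomp, LinearMap.range_comp, LinearEquiv.range,
    Submodule.map_top, LinearMap.range_comp]
  exact (LinearEquiv.finrank_map_eq e _).symm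

lemma key_le (p j n : ℕ) (hn : n ≤ p) : p * (n - j) ≤ (p - j) * n := by
  calc p * (n - j) = n * p - j * p := by rw [mul_comm, Nat.sub_mul]
    _ ≤ n * p - j * n := by
        have h1 : j * n ≤ j * p := Nat.mul_le_mul_left j hn
        omega
    _ = (p - j) * n := by rw [Nat.sub_mul, mul_comm n p]

lemma key_lt (p j n : ℕ) (hj1 : 1 ≤ j) (hj2 : j < p) (hn1 : 1 ≤ n) (hn2 : n < p) :
    p * (n - j) < (p - j) * n := by
  rcases le_or_gt n j with h | h
  · rw [Nat.sub_eq_zero_of_le h, mul_zero]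
    exact Nat.mul_pos (by omega) hn1
  · have h1 : j * n < j * p := Nat.mul_lt_mul_of_pos_left hn2 (by omega)
    have h2 : j * p ≤ n * p := Nat.mul_le_mul_right p h.le
    calc p * (n - j) = n * p - j * p := by rw [mul_comm, Nat.sub_mul]
      _ < n * p - j * n := by omega
      _ = (p - j) * n := by rw [Nat.sub_mul, mul_comm n p]

lemma sum_ite_p (p : ℕ) (hp : 0 < p) (m' : ℕ) (F : ℕ → ℕ) :
    (∑ i : Fin p, (if (i : ℕ) + 1 = p then m' else 0) * F ((i : ℕ) + 1)) = m' * F p := by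
  rw [Fin.sum_univ_eq_sum_range (fun i => (if i + 1 = p then m' else 0) * F (i + 1))]
  rw [Finset.sum_eq_single (p - 1)]
  · rw [if_pos (by omega)]
    congr 2
    omega
  · intro i hi hne
    rw [if_neg (by simp only [Finset.mem_range] at hi; omega), zero_mul]
  · intro h
    simp only [Finset.mem_range] at h
    omega


end Aux

/-- if `M` is a free `k[t]/(t^p)`-module of dimension `m = p·m'`
(Jordan type `m'[p]`) and `N` is a module of the same dimension whose Jordan
type is not `m'[p]`, then `rank(t^j, N) < rank(t^j, M)` for every `1 ≤ j < p`. -/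
theorem statement7 {k M N : Type*} [Field k]
    [AddCommGroup M] [Module k M] [FiniteDimensional k M]
    [AddCommGroup N] [Module k N] [FiniteDimensional k N]
    {p : ℕ} (hp : p.Prime) [CharP k p]
    (f : M →ₗ[k] M) (g : N →ₗ[k] N) (hf : f ^ p = 0) (hg : g ^ p = 0)
    (m' : ℕ) (hM : HasJordanType p f (fun i => if i = p then m' else 0))
    (b : ℕ → ℕ) (hN : HasJordanType p g b)
    (hdim : Module.finrank k N = Module.finrank k M)
    (hb : ∃ i ∈ Finset.Icc 1 p, b i ≠ (if i = p then m' else 0))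
    (j : ℕ) (hj1 : 1 ≤ j) (hj2 : j < p) :
    Module.finrank k (LinearMap.range (g ^ j)) <
      Module.finrank k (LinearMap.range (f ^ j)) := by
  have hp0 : 0 < p := hp.pos
  -- rank and dimension of M
  have hrM : Module.finrank k (LinearMap.range (f ^ j)) = m' * (p - j) := by
    rw [hjt_rank hM j]
    exact sum_ite_p p hp0 m' (fun n => n - j)
  have hdM : Module.finrank k M = m' * p := by
    rw [hjt_finrank hM]
    simpa using sum_ite_p p hp0 m' (fun n => n)
  -- rank and dimension of N
  have hrN : Module.finrank k (LinearMap.range (g ^ j)) =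
      ∑ i ∈ Finset.range p, b (i + 1) * ((i + 1) - j) := by
    rw [hjt_rank hN j, Fin.sum_univ_eq_sum_range (fun i => b (i + 1) * ((i + 1) - j))]
  have hdN : (∑ i ∈ Finset.range p, b (i + 1) * (i + 1)) = m' * p := by
    rw [← Fin.sum_univ_eq_sum_range (fun i => b (i + 1) * (i + 1)), ← hjt_finrank hN, hdim, hdM]
  -- find a block of size < p with positive multiplicity
  have hex : ∃ i0 ∈ Finset.range p, i0 + 1 < p ∧ 0 < b (i0 + 1) := by
    by_contra hcon
    push_neg at hcon
    have hz : ∀ i0 < p, i0 + 1 < p → b (i0 + 1) = 0 := by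
      intro i0 h1 h2
      have := hcon i0 (Finset.mem_range.2 h1)
      omega
    have hsum : (∑ i ∈ Finset.range p, b (i + 1) * (i + 1)) = b p * p := by
      rw [Finset.sum_eq_single (p - 1)]
      · congr 2 <;> omega
      · intro i hi hne
        simp only [Finset.mem_range] at hi
        rw [hz i hi (by omega), zero_mul]
      · intro h
        simp only [Finset.mem_range] at h
        omega
    have hbp : b p = m' := by
      have : b p * p = m' * p := by rw [← hsum, hdN]
      exact Nat.eq_of_mul_eq_mul_right hp0 this
    obtain ⟨i, hi, hne⟩ := hb
    simp only [Finset.mem_Icc] at hi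
    rcases eq_or_lt_of_le hi.2 with rfl | hlt
    · exact hne (by rw [if_pos rfl, hbp])
    · have h1 : i - 1 + 1 = i := by omega
      have := hz (i - 1) (by omega) (by omega)
      rw [h1] at this
      exact hne (by rw [if_neg (by omega), this])
  obtain ⟨i0, hi0mem, hi0lt, hi0pos⟩ := hex
  -- strict inequality after multiplying by p
  have hmul : p * (∑ i ∈ Finset.range p, b (i + 1) * ((i + 1) - j)) < p * (m' * (p - j)) := by
    have lhs_eq : p * (∑ i ∈ Finset.range p, b (i + 1) * ((i + 1) - j)) =
        ∑ i ∈ Finset.range p, b (i + 1) * (p * ((i + 1) - j)) := by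
      rw [Finset.mul_sum]
      exact Finset.sum_congr rfl fun i _ => by ring
    have rhs_eq : (∑ i ∈ Finset.range p, b (i + 1) * ((p - j) * (i + 1))) = p * (m' * (p - j)) := by
      have : (∑ i ∈ Finset.range p, b (i + 1) * ((p - j) * (i + 1))) =
          (p - j) * ∑ i ∈ Finset.range p, b (i + 1) * (i + 1) := by
        rw [Finset.mul_sum]
        exact Finset.sum_congr rfl fun i _ => by ring
      rw [this, hdN]
      ring
    rw [lhs_eq, ← rhs_eq]
    apply Finset.sum_lt_sum
    · intro i hi
      simp only [Finset.mem_range] at hi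
      exact Nat.mul_le_mul_left _ (key_le p j (i + 1) (by omega))
    · exact ⟨i0, hi0mem, Nat.mul_lt_mul_of_pos_left
        (key_lt p j (i0 + 1) hj1 hj2 (by omega) hi0lt) hi0pos⟩
  rw [hrN, hrM]
  exact Nat.lt_of_mul_lt_mul_left hmul
end

section
/- Let A = k[x,y]/(x^p, y^p) and let u = x - y^2 and v = x in A. Then for every finite dimensional A-module M, the element u acts freely on M (i.e. M restricted to k[u]/(u^p) is free) if and only if v acts freely on M. (In other words, the π-points t ↦ x and t ↦ x - y^2 of E = (Z/p)^2 are equivalent.) -/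
open MvPolynomial in
/-- The defining ideal `(x^p, y^p)` of `kE = k[x,y]/(x^p, y^p)`. -/
noncomputable def kEIdeal (k : Type*) [Field k] (p : ℕ) : Ideal (MvPolynomial (Fin 2) k) :=
  Ideal.span {(X 0 : MvPolynomial (Fin 2) k) ^ p, (X 1 : MvPolynomial (Fin 2) k) ^ p}

/-- The group algebra `kE = k[x,y]/(x^p, y^p)` of `E = (ℤ/p)²`. -/
abbrev kE (k : Type*) [Field k] (p : ℕ) : Type _ :=
  MvPolynomial (Fin 2) k ⧸ kEIdeal k p

/-- An element `w` of a `k`-algebra `A` acts freely on an `A`-module `M` if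
`M` is free as a module over `k[w] ≅ k[t]/(t^p)`, i.e. the Jordan type of the
action of `w` on `M` consists only of blocks of size `p`. -/
def ActsFreely (k : Type*) [Field k] (p : ℕ) {A : Type*} [CommRing A] [Algebra k A]
    (w : A) (M : Type*) [AddCommGroup M] [Module A M] [Module k M]
    [IsScalarTower k A M] : Prop :=
  ∃ n : ℕ, HasJordanType p ((LinearMap.lsmul A M w).restrictScalars k)
    (fun i => if i = p then n else 0)

namespace Stmt10

open LinearMap Finset

variable {k : Type*} [Field k]

/-- clean shift on `Fin n × Fin p → k` -/
def cShift (k : Type*) [Field k] (p n : ℕ) : ((Fin n × Fin p) → k) →ₗ[k] ((Fin n × Fin p) → k) where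
  toFun g x := if h : (x.2 : ℕ) + 1 < p then g (x.1, ⟨(x.2 : ℕ) + 1, h⟩) else 0
  map_add' g₁ g₂ := by funext x; dsimp; split <;> simp
  map_smul' c g := by funext x; dsimp; split <;> simp

lemma cShift_pow (p n m : ℕ) (g : (Fin n × Fin p) → k) (x : Fin n × Fin p) :
    ((cShift k p n ^ m) g) x =
      if h : (x.2 : ℕ) + m < p then g (x.1, ⟨(x.2 : ℕ) + m, h⟩) else 0 := by
  induction m generalizing g with
  | zero =>
      rw [pow_zero]
      show g x = _
      rw [dif_pos (show (x.2:ℕ) + 0 < p by omega)]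
      rfl
  | succ m ih =>
      rw [pow_succ, Module.End.mul_apply, ih]
      by_cases h1 : (x.2 : ℕ) + m < p
      · rw [dif_pos h1]
        show (if h : (x.2:ℕ) + m + 1 < p then g (x.1, ⟨(x.2:ℕ)+m+1, h⟩) else 0) = _
        by_cases h2 : (x.2 : ℕ) + m + 1 < p
        · rw [dif_pos h2, dif_pos (show (x.2:ℕ) + (m+1) < p by omega)]
          rfl
        · rw [dif_neg h2, dif_neg (show ¬ ((x.2:ℕ) + (m+1) < p) by omega)]
      · rw [dif_neg h1, dif_neg (show ¬ ((x.2:ℕ) + (m+1) < p) by omega)]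

lemma cShift_ker_le (p n j : ℕ) (hj : j ≤ p) :
    ker ((cShift k p n) ^ j) ≤ range ((cShift k p n) ^ (p - j)) := by
  intro g hg
  refine ⟨fun y => if h : p - j ≤ (y.2 : ℕ) then
      g (y.1, ⟨(y.2 : ℕ) - (p - j), by omega⟩) else 0, ?_⟩
  funext x
  rw [cShift_pow]
  obtain ⟨c, l⟩ := x
  by_cases h1 : (l : ℕ) + (p - j) < p
  · rw [dif_pos h1]
    rw [dif_pos (show p - j ≤ (l:ℕ) + (p - j) by omega)]
    congr 2
    · simp
  · rw [dif_neg h1]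
    have hl := l.isLt
    have hk := LinearMap.mem_ker.mp hg
    have h2 := congrFun hk (c, ⟨(l : ℕ) - j, by omega⟩)
    rw [cShift_pow] at h2
    rw [dif_pos (show (((⟨(l:ℕ) - j, by omega⟩ : Fin p)):ℕ) + j < p by simp; omega)] at h2
    simp only [Pi.zero_apply] at h2
    have h3 : g (c, l) = g (c, ⟨(l:ℕ) - j + j, by omega⟩) := by
      exact congrArg g (congrArg _ (Fin.ext (show (l:ℕ) = (l:ℕ) - j + j by omega)))
    rw [h3]
    exact h2.symm


lemma jordanIdx_fst {p n : ℕ} (x : JordanIdx p (fun i => if i = p then n else 0)) :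
    (x.1 : ℕ) + 1 = p := by
  by_contra h
  have := x.2.1.isLt
  simp only [if_neg h] at this
  omega

/-- index equivalence with the clean model -/
def toJ {p n : ℕ} (hp : 0 < p) : (Fin n × Fin p) ≃ JordanIdx p (fun i => if i = p then n else 0) where
  toFun y := ⟨⟨p - 1, by omega⟩, Fin.cast (by simp [show p - 1 + 1 = p by omega]) y.1,
      Fin.cast (by show p = p - 1 + 1; omega) y.2⟩
  invFun x := (Fin.cast (by simp [jordanIdx_fst x]) x.2.1,
      ⟨(x.2.2 : ℕ), by have h1 := jordanIdx_fst x; have h2 := x.2.2.isLt; omega⟩)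
  left_inv y := rfl
  right_inv x := by
    obtain ⟨⟨iv, hiv⟩, c, j⟩ := x
    have h : iv + 1 = p := jordanIdx_fst ⟨⟨iv, hiv⟩, c, j⟩
    have h2 : iv = p - 1 := by omega
    subst h2
    rfl

def elJ (p n : ℕ) (hp : 0 < p) :
    ((Fin n × Fin p) → k) ≃ₗ[k] JordanCarrier k p (fun i => if i = p then n else 0) where
  toFun g := g ∘ (toJ hp).symm
  invFun g := g ∘ (toJ hp)
  map_add' _ _ := rfl
  map_smul' _ _ := rfl
  left_inv g := by funext y; simp
  right_inv g := by funext x; simp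

lemma elJ_shift {p n : ℕ} (hp : 0 < p) (g : (Fin n × Fin p) → k) :
    elJ p n hp (cShift k p n g) = jordanShift k p (fun i => if i = p then n else 0) (elJ p n hp g) := by
  funext x
  obtain ⟨⟨iv, hiv⟩, c, j⟩ := x
  have h : iv + 1 = p := jordanIdx_fst ⟨⟨iv, hiv⟩, c, j⟩
  have h2 : iv = p - 1 := by omega
  subst h2
  show (cShift k p n g) ((toJ hp).symm ⟨⟨p-1, hiv⟩, c, j⟩) = _
  show (if h' : ((j : ℕ)) + 1 < p then g (Fin.cast (by simp [show p-1+1 = p by omega]) c, ⟨(j:ℕ)+1, h'⟩) else 0) = (if h' : (j:ℕ) + 1 < (p - 1) + 1 then (elJ p n hp g) ⟨⟨p-1,hiv⟩, c, ⟨(j:ℕ)+1, h'⟩⟩ else 0)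
  by_cases hc : (j : ℕ) + 1 < p
  · rw [dif_pos hc, dif_pos (show (j:ℕ) + 1 < (p-1)+1 by omega)]
    rfl
  · rw [dif_neg hc, dif_neg (show ¬ ((j:ℕ) + 1 < (p-1)+1) by omega)]

section Transport

variable {V W : Type*} [AddCommGroup V] [Module k V] [AddCommGroup W] [Module k W]

lemma tw_pow (e : V ≃ₗ[k] W) (f : V →ₗ[k] V) (S : W →ₗ[k] W)
    (he : ∀ v, e (f v) = S (e v)) (m : ℕ) (v : V) : e ((f ^ m) v) = (S ^ m) (e v) := by
  induction m generalizing v with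
  | zero => rfl
  | succ m ih =>
      rw [pow_succ, pow_succ, Module.End.mul_apply, Module.End.mul_apply, ← he v, ih]

lemma tw_ker_le_range (e : V ≃ₗ[k] W) (f : V →ₗ[k] V) (S : W →ₗ[k] W)
    (he : ∀ v, e (f v) = S (e v)) {i j : ℕ}
    (h : ker (S ^ i) ≤ range (S ^ j)) : ker (f ^ i) ≤ range (f ^ j) := by
  intro v hv
  have h1 : (S ^ i) (e v) = 0 := by
    rw [← tw_pow e f S he, LinearMap.mem_ker.mp hv, map_zero]
  obtain ⟨w, hw⟩ := h h1
  refine ⟨e.symm w, e.injective ?_⟩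
  rw [tw_pow e f S he, e.apply_symm_apply, hw]

end Transport

lemma hasJordanType_iff_clean {V : Type*} [AddCommGroup V] [Module k V] {p : ℕ} (hp : 0 < p)
    (f : V →ₗ[k] V) (n : ℕ) :
    HasJordanType p f (fun i => if i = p then n else 0) ↔
      ∃ e : V ≃ₗ[k] ((Fin n × Fin p) → k), ∀ v, e (f v) = cShift k p n (e v) := by
  constructor
  · rintro ⟨e, he⟩
    refine ⟨e.trans (elJ p n hp).symm, fun v => ?_⟩
    show (elJ p n hp).symm (e (f v)) = cShift k p n ((elJ p n hp).symm (e v))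
    rw [he]
    apply (elJ p n hp).injective
    rw [elJ_shift, (elJ p n hp).apply_symm_apply, (elJ p n hp).apply_symm_apply]
  · rintro ⟨e, he⟩
    refine ⟨e.trans (elJ p n hp), fun v => ?_⟩
    show (elJ p n hp) (e (f v)) = _
    rw [he, elJ_shift]
    rfl


section Construct

variable {V : Type*} [AddCommGroup V] [Module k V]

lemma pow_ge_eq_zero {q : ℕ} (f : V →ₗ[k] V) (hfp : f ^ (q + 1) = 0) {m : ℕ} (hm : q + 1 ≤ m) :
    f ^ m = 0 := by
  rw [show m = (q + 1) + (m - (q + 1)) from by omega, pow_add, hfp, zero_mul]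

set_option maxHeartbeats 1600000 in
lemma exists_free_jordanType [FiniteDimensional k V] {p : ℕ} (hp : 0 < p) (f : V →ₗ[k] V)
    (hfp : f ^ p = 0) (hker : ker f ≤ range (f ^ (p - 1))) :
    ∃ n, HasJordanType p f (fun i => if i = p then n else 0) := by
  obtain ⟨q, rfl⟩ : ∃ q, p = q + 1 := ⟨p - 1, by omega⟩
  have hker : ker f ≤ range (f ^ q) := hker
  obtain ⟨W, hW⟩ := Submodule.exists_isCompl (ker (f ^ q))
  set n := Module.finrank k W with hn
  set w := Module.finBasis k W with hw
  set vec : Fin n × Fin (q + 1) → V := fun y => (f ^ (q - (y.2 : ℕ))) (w y.1 : V) with hvec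
  set Φ : ((Fin n × Fin (q + 1)) → k) →ₗ[k] V :=
    { toFun := fun g => ∑ y, g y • vec y,
      map_add' := fun g₁ g₂ => by simp [add_smul, Finset.sum_add_distrib],
      map_smul' := fun c g => by simp [smul_smul, Finset.smul_sum] } with hΦ
  have hΦapp : ∀ g, Φ g = ∑ y, g y • vec y := fun g => rfl
  -- intertwining
  have hint : ∀ g, Φ (cShift k (q + 1) n g) = f (Φ g) := by
    intro g
    rw [hΦapp, hΦapp, map_sum]
    rw [Fintype.sum_prod_type, Fintype.sum_prod_type]
    refine Finset.sum_congr rfl fun c _ => ?_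
    set G : ℕ → k := fun t => if h : t < q + 1 then g (c, ⟨t, h⟩) else 0 with hG
    have hG1 : ∀ j : Fin (q + 1), (cShift k (q + 1) n g) (c, j) = G ((j : ℕ) + 1) :=
      fun j => rfl
    have hG2 : ∀ j : Fin (q + 1), g (c, j) = G (j : ℕ) := by
      intro j
      show _ = (if h : (j : ℕ) < q + 1 then g (c, ⟨(j : ℕ), h⟩) else 0)
      rw [dif_pos j.isLt]
    calc ∑ j : Fin (q + 1), (cShift k (q + 1) n g) (c, j) • vec (c, j)
        = ∑ j : Fin (q + 1), (fun t => G (t + 1) • (f ^ (q - t)) (w c : V)) (j : ℕ) := by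
          refine Finset.sum_congr rfl fun j _ => ?_
          rw [hG1 j]
      _ = ∑ t ∈ Finset.range (q + 1), G (t + 1) • (f ^ (q - t)) (w c : V) :=
          Fin.sum_univ_eq_sum_range (fun t => G (t + 1) • (f ^ (q - t)) (w c : V)) (q + 1)
      _ = ∑ t ∈ Finset.range q, G (t + 1) • (f ^ (q - t)) (w c : V) := by
          rw [Finset.sum_range_succ]
          have : G (q + 1) = 0 := by
            show (if h : q + 1 < q + 1 then g (c, ⟨q + 1, h⟩) else (0:k)) = 0
            rw [dif_neg (by omega)]
          rw [this, zero_smul, add_zero]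
      _ = ∑ t ∈ Finset.range q, G (t + 1) • (f ^ ((q + 1) - (t + 1))) (w c : V) := by
          refine Finset.sum_congr rfl fun t _ => ?_
          rw [show (q + 1) - (t + 1) = q - t from by omega]
      _ = ∑ t ∈ Finset.range (q + 1), G t • (f ^ ((q + 1) - t)) (w c : V) := by
          rw [Finset.sum_range_succ' (fun t => G t • (f ^ ((q + 1) - t)) (w c : V)) q]
          have : (f ^ (q + 1 - 0)) (w c : V) = 0 := by rw [Nat.sub_zero, hfp]; rfl
          rw [this, smul_zero, add_zero]
      _ = ∑ j : Fin (q + 1), G (j : ℕ) • (f ^ ((q + 1) - (j : ℕ))) (w c : V) :=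
          (Fin.sum_univ_eq_sum_range (fun t => G t • (f ^ ((q + 1) - t)) (w c : V)) (q + 1)).symm
      _ = ∑ j : Fin (q + 1), f (g (c, j) • vec (c, j)) := by
          refine Finset.sum_congr rfl fun j _ => ?_
          rw [map_smul, hG2 j]
          congr 1
          rw [hvec]
          show (f ^ (q + 1 - (j : ℕ))) (w c : V) = f ((f ^ (q - (j : ℕ))) (w c : V))
          rw [← Module.End.mul_apply, ← pow_succ',
            show q + 1 - (j:ℕ) = (q - (j:ℕ)) + 1 from by have := j.isLt; omega]
  -- injectivity
  have hinj : Function.Injective Φ := by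
    rw [← LinearMap.ker_eq_bot, LinearMap.ker_eq_bot']
    intro g hg
    rw [hΦapp] at hg
    set U : ℕ → V := fun t => if h : t < q + 1 then ∑ c, g (c, ⟨t, h⟩) • ((w c : W) : V) else 0
      with hU
    have hR : ∑ t ∈ Finset.range (q + 1), (f ^ (q - t)) (U t) = 0 := by
      rw [← hg, Fintype.sum_prod_type_right]
      rw [← Fin.sum_univ_eq_sum_range (fun t => (f ^ (q - t)) (U t)) (q + 1)]
      refine (Finset.sum_congr rfl fun j _ => ?_).symm
      show ∑ x : Fin n, g (x, j) • vec (x, j) = (f ^ (q - (j:ℕ))) (U (j:ℕ))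
      have hUj : U (j:ℕ) = ∑ c : Fin n, g (c, ⟨(j:ℕ), j.isLt⟩) • ((w c : W) : V) := by
        show (if h : (j:ℕ) < q + 1 then ∑ c : Fin n, g (c, ⟨(j:ℕ), h⟩) • ((w c : W) : V) else 0) = _
        rw [dif_pos j.isLt]
      rw [hUj, map_sum]
      refine Finset.sum_congr rfl fun c _ => ?_
      rw [map_smul]
    have claim : ∀ m t, (q + 1) - m ≤ t → ∀ (h : t < q + 1) (c : Fin n), g (c, ⟨t, h⟩) = 0 := by
      intro m
      induction m with
      | zero => intro t ht h c; omega
      | succ m ih =>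
          intro t ht h c
          by_cases hc : q + 1 - m ≤ t
          · exact ih t hc h c
          · have hU0 : ∀ t', t < t' → U t' = 0 := by
              intro t' h'
              show (if h2 : t' < q + 1 then ∑ c : Fin n, g (c, ⟨t', h2⟩) • ((w c : W) : V) else 0) = 0
              by_cases h2 : t' < q + 1
              · rw [dif_pos h2]
                refine Finset.sum_eq_zero fun c' _ => ?_
                rw [ih t' (by omega) h2 c', zero_smul]
              · rw [dif_neg h2]
            have h3 : (f ^ q) (U t) = 0 := by
              have h4 := congrArg (f ^ t) hR
              rw [map_sum, map_zero] at h4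
              rw [Finset.sum_eq_single t] at h4
              · rwa [← Module.End.mul_apply, ← pow_add, show t + (q - t) = q from by omega] at h4
              · intro t' ht' hne
                rcases Nat.lt_or_ge t t' with h5 | h5
                · rw [hU0 t' h5, map_zero, map_zero]
                · have h6 : t' < t := by omega
                  rw [← Module.End.mul_apply, ← pow_add,
                    pow_ge_eq_zero f hfp (show q + 1 ≤ t + (q - t') by
                      have := Finset.mem_range.mp ht'; omega)]
                  rfl
              · intro hmem
                exact absurd (Finset.mem_range.mpr (by omega)) hmem
            have hUW : U t ∈ W := by
              show (if h : t < q + 1 then ∑ c : Fin n, g (c, ⟨t, h⟩) • ((w c : W) : V) else 0) ∈ W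
              rw [dif_pos h]
              exact Submodule.sum_mem _ fun c' _ => Submodule.smul_mem _ _ (w c').2
            have hU0' : U t = 0 :=
              (Submodule.disjoint_def.mp hW.disjoint.symm) _ hUW (LinearMap.mem_ker.mpr h3)
            have h6 : ∑ c', g (c', ⟨t, h⟩) • w c' = (0 : W) := by
              have hcoe : ((∑ c', g (c', ⟨t, h⟩) • w c' : W) : V) = U t := by
                show _ = (if h : t < q + 1 then ∑ c : Fin n, g (c, ⟨t, h⟩) • ((w c : W) : V) else 0)
                rw [dif_pos h]
                push_cast
                rfl
              apply Subtype.ext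
              rw [hcoe, hU0']
              rfl
            exact Fintype.linearIndependent_iff.mp w.linearIndependent _ h6 c
    funext y
    obtain ⟨c, j⟩ := y
    have := claim (q + 1) (j : ℕ) (by omega) j.isLt c
    simpa using this
  -- dimension count
  have hstep : ∀ j : ℕ, j ≤ q →
      Module.finrank k (range (f ^ j)) =
        Module.finrank k (ker f) + Module.finrank k (range (f ^ (j + 1))) := by
    intro j hj
    have hkerle : ker f ≤ range (f ^ j) := by
      refine le_trans hker ?_
      rw [show q = j + (q - j) from by omega, pow_add]
      exact LinearMap.range_comp_le_range _ _
    have hrn := LinearMap.finrank_range_add_finrank_ker (f.comp (range (f ^ j)).subtype)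
    have h1 : range (f.comp (range (f ^ j)).subtype) = range (f ^ (j + 1)) := by
      rw [LinearMap.range_comp, Submodule.range_subtype, pow_succ', Module.End.mul_eq_comp,
        LinearMap.range_comp]
    have h2 : Module.finrank k (ker (f.comp (range (f ^ j)).subtype)) =
        Module.finrank k (ker f) := by
      rw [LinearMap.ker_comp]
      exact (Submodule.comapSubtypeEquivOfLe hkerle).finrank_eq
    rw [h1, h2] at hrn
    omega
  have hchain : ∀ m : ℕ, m ≤ q + 1 →
      Module.finrank k (range (f ^ (q + 1 - m))) = m * Module.finrank k (ker f) := by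
    intro m
    induction m with
    | zero => intro _; rw [Nat.sub_zero, hfp, LinearMap.range_zero, finrank_bot, Nat.zero_mul]
    | succ m ih =>
        intro hm
        have h1 := hstep (q + 1 - (m + 1)) (by omega)
        rw [show q + 1 - (m + 1) + 1 = q + 1 - m from by omega] at h1
        rw [h1, ih (by omega)]
        ring
  have hdim : Module.finrank k V = (q + 1) * Module.finrank k (ker f) := by
    have := hchain (q + 1) le_rfl
    rw [Nat.sub_self, pow_zero] at this
    rw [← this]
    have : range (1 : V →ₗ[k] V) = ⊤ := LinearMap.range_eq_top.mpr fun v => ⟨v, rfl⟩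
    rw [this, finrank_top]
  have hnker : n = Module.finrank k (ker f) := by
    have h1 := Submodule.finrank_add_eq_of_isCompl hW
    have h2 := LinearMap.finrank_range_add_finrank_ker (f ^ q)
    have h3 := hchain 1 (by omega)
    rw [show q + 1 - 1 = q from rfl, one_mul] at h3
    omega
  have hsurj : range Φ = ⊤ := by
    apply Submodule.eq_top_of_finrank_eq
    rw [LinearMap.finrank_range_of_inj hinj, Module.finrank_pi, Fintype.card_prod,
      Fintype.card_fin, Fintype.card_fin, hdim, hnker]
    ring
  set Φe := LinearEquiv.ofBijective Φ ⟨hinj, LinearMap.range_eq_top.mp hsurj⟩ with hΦe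
  have hΦe' : ∀ g, Φe g = Φ g := fun g => rfl
  refine ⟨n, (hasJordanType_iff_clean hp f n).mpr ⟨Φe.symm, fun v => ?_⟩⟩
  have hv : Φ (Φe.symm v) = v := Φe.apply_symm_apply v
  have h2 : Φe.symm (f v) = Φe.symm (Φ (cShift k (q + 1) n (Φe.symm v))) := by
    rw [hint, hv]
  rw [h2]
  exact Φe.symm_apply_apply _

end Construct


section Operators

variable (A : Type*) [CommRing A] [Algebra k A]
variable (M : Type*) [AddCommGroup M] [Module A M] [Module k M] [IsScalarTower k A M]

variable (k) in
/-- the action operator -/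
abbrev Lop (w : A) : M →ₗ[k] M := (LinearMap.lsmul A M w).restrictScalars k

variable {A M}

lemma Lop_apply (w : A) (v : M) : Lop k A M w v = w • v := rfl

lemma Lop_pow_apply (w : A) (m : ℕ) (v : M) : ((Lop k A M w) ^ m) v = w ^ m • v := by
  induction m with
  | zero => rw [pow_zero, pow_zero, one_smul]; rfl
  | succ m ih =>
      rw [pow_succ', Module.End.mul_apply, ih, Lop_apply, smul_smul, ← pow_succ']

lemma Lop_pow_eq_zero {w : A} {m : ℕ} (h : w ^ m = 0) : (Lop k A M w) ^ m = 0 := by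
  ext v
  rw [Lop_pow_apply, h, zero_smul]
  rfl

/-- The key kernel-range lemma: if `a` has `ker/range` exactness at levels `s` and `p - s`
and `b` is suitably nilpotent, then `ker (a + b) ≤ range ((a+b)^(p-1))`. -/
lemma ker_le_range_pow {p s : ℕ} (hs1 : 1 ≤ s) (hsp : s ≤ p) (a b : A)
    (hbs : b ^ s = 0) (hb2 : b ^ (2 * (p - s)) = 0)
    (hbin : (a + b) ^ (p - 1) = a ^ (p - s) * ∑ i ∈ Finset.range s, a ^ i * (-b) ^ (s - 1 - i))
    (H1 : ker ((Lop k A M a) ^ s) ≤ LinearMap.range ((Lop k A M a) ^ (p - s)))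
    (H2 : ker ((Lop k A M a) ^ (p - s)) ≤ LinearMap.range ((Lop k A M a) ^ s)) :
    ker (Lop k A M (a + b)) ≤ LinearMap.range ((Lop k A M (a + b)) ^ (p - 1)) := by
  have hpow : ∀ (m' : M), (a + b) • m' = 0 → ∀ j, a ^ j • m' = (-b) ^ j • m' := by
    intro m' hm' j
    have hab : a • m' = (-b) • m' := by
      have h1 : a • m' + b • m' = 0 := by rw [← add_smul, hm']
      rw [neg_smul]
      exact eq_neg_of_add_eq_zero_left h1
    induction j with
    | zero => rw [pow_zero, pow_zero]
    | succ j ih =>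
        calc a ^ (j + 1) • m' = a • (a ^ j • m') := by rw [smul_smul, ← pow_succ']
          _ = a • ((-b) ^ j • m') := by rw [ih]
          _ = (-b) ^ j • (a • m') := by rw [smul_smul, smul_smul, mul_comm]
          _ = (-b) ^ j • ((-b) • m') := by rw [hab]
          _ = (-b) ^ (j + 1) • m' := by rw [smul_smul, ← pow_succ]
  set c : A := ∑ i ∈ Finset.range s, a ^ i * (-b) ^ (s - 1 - i) with hc
  have hcu : c * (a + b) = a ^ s := by
    have h1 := geom_sum₂_mul a (-b) s
    rw [sub_neg_eq_add] at h1
    rw [hc, h1, neg_pow, hbs, mul_zero, sub_zero]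
  have step : ∀ m' : M, (a + b) • m' = 0 →
      ∃ m₂ κ, (a + b) • κ = 0 ∧ m' = (a + b) ^ (p - 1) • m₂ + (-b) ^ (p - s) • κ := by
    intro m' hm'
    have h1 : a ^ s • m' = 0 := by
      rw [hpow m' hm' s, neg_pow, hbs, mul_zero, zero_smul]
    obtain ⟨m₁, hm₁⟩ := H1 (show m' ∈ ker ((Lop k A M a) ^ s) by
      rw [LinearMap.mem_ker, Lop_pow_apply]; exact h1)
    rw [Lop_pow_apply] at hm₁
    have h2 : a ^ (p - s) • ((a + b) • m₁) = 0 := by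
      rw [smul_smul, mul_comm, ← smul_smul, hm₁, hm']
    obtain ⟨m₂, hm₂⟩ := H2 (show (a + b) • m₁ ∈ ker ((Lop k A M a) ^ (p - s)) by
      rw [LinearMap.mem_ker, Lop_pow_apply]; exact h2)
    rw [Lop_pow_apply] at hm₂
    refine ⟨m₂, m₁ - c • m₂, ?_, ?_⟩
    · rw [smul_sub, smul_smul, mul_comm, hcu, ← hm₂, sub_self]
    · have hκ : (a + b) • (m₁ - c • m₂) = 0 := by
        rw [smul_sub, smul_smul, mul_comm, hcu, ← hm₂, sub_self]
      calc m' = a ^ (p - s) • m₁ := hm₁.symm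
        _ = a ^ (p - s) • (c • m₂ + (m₁ - c • m₂)) := by
            rw [show c • m₂ + (m₁ - c • m₂) = m₁ from by abel]
        _ = (a ^ (p - s) * c) • m₂ + a ^ (p - s) • (m₁ - c • m₂) := by
            rw [smul_add, smul_smul]
        _ = (a + b) ^ (p - 1) • m₂ + (-b) ^ (p - s) • (m₁ - c • m₂) := by
            rw [← hbin, hpow _ hκ (p - s)]
  intro m hm
  have hm0 : (a + b) • m = 0 := hm
  obtain ⟨m₂, κ, hκ, hmeq⟩ := step m hm0
  obtain ⟨m₂', κ', hκ', hκeq⟩ := step κ hκ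
  refine ⟨m₂ + (-b) ^ (p - s) • m₂', ?_⟩
  have hnb2 : (-b) ^ (2 * (p - s)) = (0 : A) := by rw [neg_pow, hb2, mul_zero]
  rw [Lop_pow_apply, hmeq, hκeq, smul_add, smul_add, smul_smul, smul_smul, smul_smul,
    ← pow_add, show (p - s) + (p - s) = 2 * (p - s) from by omega, hnb2,
    zero_smul, add_zero, mul_comm ((a + b) ^ (p - 1))]

end Operators

section Binomial

variable (k) in
lemma choose_cast {p : ℕ} (hp : p.Prime) [CharP k p] :
    ∀ i, i ≤ p - 1 → (((p - 1).choose i : ℕ) : k) = (-1 : k) ^ i := by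
  intro i
  induction i with
  | zero => intro _; simp
  | succ i ih =>
      intro hi
      have hp1 : p - 1 + 1 = p := by have := hp.pos; omega
      have h1 : (p - 1).choose i + (p - 1).choose (i + 1) = p.choose (i + 1) := by
        conv_rhs => rw [← hp1]
        rw [Nat.choose_succ_succ]
      have h2 : ((p.choose (i + 1) : ℕ) : k) = 0 := by
        rw [CharP.cast_eq_zero_iff k p]
        exact hp.dvd_choose_self (by omega) (by omega)
      have h3 := congrArg (fun m : ℕ => (m : k)) h1
      push_cast at h3
      rw [ih (by omega)] at h3
      rw [h2] at h3
      have h4 : (((p - 1).choose (i + 1) : ℕ) : k) = -(-1 : k) ^ i := by linear_combination h3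
      rw [h4, pow_succ, mul_neg_one]

variable (k) in
lemma neg_one_pow_eq {p : ℕ} (hp : p.Prime) [CharP k p] {i : ℕ} (hi : i ≤ p - 1) :
    (-1 : k) ^ i = (-1 : k) ^ (p - 1 - i) := by
  have hsq : ∀ m : ℕ, (-1 : k) ^ m * (-1 : k) ^ m = 1 := by
    intro m
    rw [← mul_pow, neg_mul_neg, one_mul, one_pow]
  have hone : (-1 : k) ^ (p - 1) = 1 := by
    rcases hp.eq_two_or_odd' with h2 | hodd
    · subst h2
      have h2k : (2 : k) = 0 := by exact_mod_cast CharP.cast_eq_zero k 2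
      have hneg : (-1 : k) = 1 := by linear_combination -h2k
      rw [hneg, one_pow]
    · exact Even.neg_one_pow (Nat.Odd.sub_odd hodd odd_one)
  have hadd : (-1 : k) ^ i * (-1 : k) ^ (p - 1 - i) = 1 := by
    rw [← pow_add, show i + (p - 1 - i) = p - 1 from by omega, hone]
  calc (-1 : k) ^ i = (-1 : k) ^ i * ((-1 : k) ^ (p - 1 - i) * (-1 : k) ^ (p - 1 - i)) := by
        rw [hsq, mul_one]
    _ = ((-1 : k) ^ i * (-1 : k) ^ (p - 1 - i)) * (-1 : k) ^ (p - 1 - i) := by ring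
    _ = (-1 : k) ^ (p - 1 - i) := by rw [hadd, one_mul]

variable {A : Type*} [CommRing A] [Algebra k A]

variable (k) in
lemma neg_one_pow_eq_A {p : ℕ} (hp : p.Prime) [CharP k p] {i : ℕ} (hi : i ≤ p - 1) :
    (-1 : A) ^ i = (-1 : A) ^ (p - 1 - i) := by
  have h := congrArg (algebraMap k A) (neg_one_pow_eq k hp hi)
  rw [map_pow, map_pow, map_neg, map_one] at h
  exact h

variable (k) in
lemma cast_choose_A {p : ℕ} (hp : p.Prime) [CharP k p] {i : ℕ} (hi : i ≤ p - 1) :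
    (((p - 1).choose i : ℕ) : A) = (-1 : A) ^ i := by
  have h1 : (((p - 1).choose i : ℕ) : A) = algebraMap k A (((p - 1).choose i : ℕ) : k) := by
    rw [map_natCast]
  rw [h1, choose_cast k hp i hi, map_pow, map_neg, map_one]

variable (k) in
lemma binom_expand {p : ℕ} (hp : p.Prime) [CharP k p] {s : ℕ} (hs1 : 1 ≤ s) (hsp : s ≤ p)
    (a b : A) (hbs : b ^ s = 0) :
    (a + b) ^ (p - 1) = a ^ (p - s) * ∑ i ∈ Finset.range s, a ^ i * (-b) ^ (s - 1 - i) := by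
  have hppos := hp.pos
  rw [add_pow]
  have hrange : p - 1 + 1 = p := by omega
  rw [hrange]
  have hterm : ∀ i ∈ Finset.range p,
      a ^ i * b ^ (p - 1 - i) * (((p - 1).choose i : ℕ) : A) =
        if p - s ≤ i then a ^ i * (-b) ^ (p - 1 - i) else 0 := by
    intro i hi
    have hilt := Finset.mem_range.mp hi
    by_cases hcase : p - s ≤ i
    · rw [if_pos hcase, cast_choose_A k hp (by omega),
        neg_one_pow_eq_A k hp (show i ≤ p - 1 by omega), neg_pow b]
      ring
    · rw [if_neg hcase]
      have : b ^ (p - 1 - i) = 0 := by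
        rw [show p - 1 - i = s + (p - 1 - i - s) from by omega, pow_add, hbs, zero_mul]
      rw [this, mul_zero, zero_mul]
  rw [Finset.sum_congr rfl hterm]
  rw [← Finset.sum_range_add_sum_Ico _ (show p - s ≤ p from by omega)]
  have hzero1 : ∑ i ∈ Finset.range (p - s), (if p - s ≤ i then a ^ i * (-b) ^ (p - 1 - i) else 0) = 0 :=
    Finset.sum_eq_zero fun i hi => if_neg (by have := Finset.mem_range.mp hi; omega)
  rw [hzero1, zero_add]
  rw [Finset.sum_congr rfl (fun i hi => if_pos (Finset.mem_Ico.mp hi).1)]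
  rw [Finset.sum_Ico_eq_sum_range]
  rw [show p - (p - s) = s from by omega]
  rw [Finset.mul_sum]
  refine Finset.sum_congr rfl fun i hi => ?_
  have his := Finset.mem_range.mp hi
  rw [pow_add, show p - 1 - (p - s + i) = s - 1 - i from by omega, mul_assoc]

variable (k) in
lemma add_pow_prime_eq_zero {p : ℕ} (hp : p.Prime) [CharP k p] {s : ℕ} (hsp : s ≤ p)
    (a b : A) (ha : a ^ p = 0) (hb : b ^ s = 0) : (a + b) ^ p = 0 := by
  rw [add_pow]
  refine Finset.sum_eq_zero fun i hi => ?_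
  have hilt := Finset.mem_range.mp hi
  rcases Nat.eq_or_lt_of_le (Nat.lt_succ_iff.mp hilt) with heq | hlt
  · rw [heq, ha, zero_mul, zero_mul]
  · rcases Nat.eq_zero_or_pos i with h0 | h0
    · subst h0
      have : b ^ (p - 0) = 0 := by
        rw [Nat.sub_zero, show p = s + (p - s) from by omega, pow_add, hb, zero_mul]
      rw [this, mul_zero, zero_mul]
    · have hdvd : ((p.choose i : ℕ) : A) = 0 := by
        have h1 : ((p.choose i : ℕ) : A) = algebraMap k A ((p.choose i : ℕ) : k) := by
          rw [map_natCast]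
        rw [h1, (CharP.cast_eq_zero_iff k p _).mpr (hp.dvd_choose_self (by omega) hlt), map_zero]
      rw [hdvd, mul_zero]

end Binomial

end Stmt10

namespace Stmt10

open LinearMap

variable {k : Type*} [Field k]

lemma transfer {p : ℕ} (hp : p.Prime) [CharP k p] {A : Type*} [CommRing A] [Algebra k A]
    {M : Type*} [AddCommGroup M] [Module A M] [Module k M] [IsScalarTower k A M]
    [FiniteDimensional k M] (a b : A) {s : ℕ} (hs1 : 1 ≤ s) (hsp : s ≤ p)
    (hbs : b ^ s = 0) (hb2 : b ^ (2 * (p - s)) = 0) (hab : (a + b) ^ p = 0)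
    (h : ∃ n, HasJordanType p (Lop k A M a) (fun i => if i = p then n else 0)) :
    ∃ n, HasJordanType p (Lop k A M (a + b)) (fun i => if i = p then n else 0) := by
  obtain ⟨n, hn⟩ := h
  have H1 : ker ((Lop k A M a) ^ s) ≤ LinearMap.range ((Lop k A M a) ^ (p - s)) := by
    obtain ⟨e, he⟩ := (hasJordanType_iff_clean hp.pos _ n).mp hn
    exact tw_ker_le_range e _ _ he (cShift_ker_le p n s hsp)
  have H2 : ker ((Lop k A M a) ^ (p - s)) ≤ LinearMap.range ((Lop k A M a) ^ s) := by
    obtain ⟨e, he⟩ := (hasJordanType_iff_clean hp.pos _ n).mp hn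
    have h3 := cShift_ker_le (k := k) p n (p - s) (Nat.sub_le p s)
    rw [show p - (p - s) = s from by omega] at h3
    exact tw_ker_le_range e _ _ he h3
  have hker := ker_le_range_pow hs1 hsp a b hbs hb2 (binom_expand k hp hs1 hsp a b hbs) H1 H2
  exact exists_free_jordanType hp.pos _ (Lop_pow_eq_zero hab) hker

end Stmt10

open Stmt10 in
open MvPolynomial in
/-- in `A = k[x,y]/(x^p, y^p)`, for every finite dimensional
`A`-module `M`, the element `u = x - y²` acts freely on `M` iff `v = x` acts
freely on `M` (the π-points `t ↦ x` and `t ↦ x - y²` are equivalent). -/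
theorem statement10 {k : Type*} [Field k] {p : ℕ} (hp : p.Prime) [CharP k p]
    (x y : kE k p)
    (hx : x = Ideal.Quotient.mk (kEIdeal k p) (X 0))
    (hy : y = Ideal.Quotient.mk (kEIdeal k p) (X 1))
    (M : Type*) [AddCommGroup M] [Module (kE k p) M] [Module k M]
    [IsScalarTower k (kE k p) M] [FiniteDimensional k M] :
    ActsFreely k p (x - y ^ 2) M ↔ ActsFreely k p x M := by
  have hppos := hp.pos
  have h2le := hp.two_le
  have hxp : x ^ p = 0 := by
    rw [hx, ← map_pow, Ideal.Quotient.eq_zero_iff_mem]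
    exact Ideal.subset_span (Set.mem_insert _ _)
  have hyp : y ^ p = 0 := by
    rw [hy, ← map_pow, Ideal.Quotient.eq_zero_iff_mem]
    exact Ideal.subset_span (Set.mem_insert_of_mem _ rfl)
  have hym : ∀ m, p ≤ m → y ^ m = 0 := fun m hm => by
    rw [show m = p + (m - p) from by omega, pow_add, hyp, zero_mul]
  set s : ℕ := (p + 1) / 2 with hs
  have hs1 : 1 ≤ s := by omega
  have hsp : s ≤ p := by omega
  have hy2s : (y ^ 2) ^ s = 0 := by rw [← pow_mul]; exact hym _ (by omega)
  have hy22 : (y ^ 2) ^ (2 * (p - s)) = 0 := by rw [← pow_mul]; exact hym _ (by omega)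
  have hny2s : (-(y ^ 2)) ^ s = 0 := by
    rw [show (-(y ^ 2)) = (-1) * y ^ 2 from by ring, mul_pow, hy2s, mul_zero]
  have hny22 : (-(y ^ 2)) ^ (2 * (p - s)) = 0 := by
    rw [show (-(y ^ 2)) = (-1) * y ^ 2 from by ring, mul_pow, hy22, mul_zero]
  constructor
  · intro h
    unfold ActsFreely at h ⊢
    have hadd : (x - y ^ 2) + y ^ 2 = x := by ring
    have hab : ((x - y ^ 2) + y ^ 2) ^ p = 0 := by rw [hadd]; exact hxp
    have h2 := transfer hp (x - y ^ 2) (y ^ 2) hs1 hsp hy2s hy22 hab h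
    rwa [hadd] at h2
  · intro h
    unfold ActsFreely at h ⊢
    have hadd : x + (-(y ^ 2)) = x - y ^ 2 := by ring
    have hab : (x + (-(y ^ 2))) ^ p = 0 :=
      add_pow_prime_eq_zero k hp hsp x (-(y ^ 2)) hxp hny2s
    have h2 := transfer hp x (-(y ^ 2)) hs1 hsp hny2s hny22 hab h
    rwa [hadd] at h2
end

section
/- Let G be a group, k a field of characteristic p, M a finite dimensional kG-module, and ζ ∈ H^1(G, M) with corresponding extension 0 → M → E_ζ → k → 0. For any flat algebra map α: K[t]/(t^p) → KG (K/k a field extension), the pulled back class α^*(ζ_K) ∈ H^1(K[t]/(t^p), M_K) vanishes if and only if rank(α(t) on E_{ζ,K}) = rank(α(t) on M_K). -/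
open Polynomial

/-- let `G` be a group, `K` a field of characteristic `p`, `M` a
finite dimensional `KG`-module, and `ζ ∈ H¹(G, M)` a cohomology class, given by
its corresponding extension `0 → M → E_ζ → K → 0` of `KG`-modules (`K` the
trivial module, on which `KG` acts through the augmentation).  Let
`α : K[t]/(t^p) → KG` be a flat `K`-algebra map (a π-point) and `u = α(t)`.
Since `H¹(K[t]/(t^p), M_K)` classifies extensions, `α^*(ζ)` vanishes iff the
restricted extension splits, i.e. iff there is a linear section `s` of `ψ`
with `u • s = 0`; the claim is that this happens iff
`rank(u, E_ζ) = rank(u, M)`. -/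
theorem statement13 {p : ℕ} (hp : p.Prime) {K : Type} [Field K] [CharP K p]
    {G : Type} [Group G] {M E : Type} [AddCommGroup M] [AddCommGroup E]
    [Module (MonoidAlgebra K G) M] [Module (MonoidAlgebra K G) E]
    [Module K M] [Module K E]
    [IsScalarTower K (MonoidAlgebra K G) M] [IsScalarTower K (MonoidAlgebra K G) E]
    [FiniteDimensional K M] [FiniteDimensional K E]
    -- the extension 0 → M → E → K → 0 of KG-modules
    (φ : M →ₗ[MonoidAlgebra K G] E) (hφ : Function.Injective φ)
    (ψ : E →ₗ[K] K) (hψ : Function.Surjective ψ)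
    (hψA : ∀ (a : MonoidAlgebra K G) (x : E),
      ψ (a • x) = (MonoidAlgebra.lift K K G 1 : MonoidAlgebra K G →ₐ[K] K) a • ψ x)
    (hex : LinearMap.range (φ.restrictScalars K) = LinearMap.ker ψ)
    -- the π-point α : K[t]/(t^p) → KG, a flat map of K-algebras, and u = α(t)
    (α : AdjoinRoot (X ^ p : K[X]) →ₐ[K] MonoidAlgebra K G)
    (hflat : letI : Module (AdjoinRoot (X ^ p : K[X])) (MonoidAlgebra K G) :=
        Module.compHom (MonoidAlgebra K G) α.toRingHom
      Module.Flat (AdjoinRoot (X ^ p : K[X])) (MonoidAlgebra K G))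
    (u : MonoidAlgebra K G) (hu : u = α (AdjoinRoot.root _)) :
    (∃ s : K →ₗ[K] E, ψ.comp s = LinearMap.id ∧ ∀ c : K, u • s c = 0) ↔
      Module.finrank K (LinearMap.range
          (Algebra.lsmul K K E u)) =
        Module.finrank K (LinearMap.range
          (Algebra.lsmul K K M u)) := by
  -- u is nilpotent: u ^ p = 0
  have hup : u ^ p = 0 := by
    rw [hu, ← map_pow]
    have hroot : (AdjoinRoot.root (X ^ p : K[X])) ^ p = 0 := by
      rw [show AdjoinRoot.root (X ^ p : K[X]) = AdjoinRoot.mk _ X from rfl, ← map_pow,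
        AdjoinRoot.mk_self]
    rw [hroot, map_zero]
  -- the augmentation kills u
  set ε : MonoidAlgebra K G →ₐ[K] K := (MonoidAlgebra.lift K K G 1 : MonoidAlgebra K G →ₐ[K] K)
  have hεu : ε u = 0 := by
    have h1 : (ε u) ^ p = 0 := by rw [← map_pow, hup, map_zero]
    exact pow_eq_zero_iff hp.ne_zero |>.mp h1
  have hψu : ∀ x : E, ψ (u • x) = 0 := fun x => by rw [hψA, hεu, zero_smul]
  -- K-scalars commute with u
  have hcomm : ∀ (c : K) (x : E), u • (c • x) = c • (u • x) := by
    intro c x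
    rw [← algebraMap_smul (MonoidAlgebra K G) c x, ← mul_smul, ← Algebra.commutes, mul_smul,
      algebraMap_smul]
  -- φ intertwines u-multiplication
  have hφu : ∀ m : M, φ (u • m) = u • φ m := fun m => φ.map_smul u m
  have hle : Submodule.map (φ.restrictScalars K) (LinearMap.range (Algebra.lsmul K K M u)) ≤
      LinearMap.range (Algebra.lsmul K K E u) := by
    rintro _ ⟨_, ⟨m, rfl⟩, rfl⟩
    exact ⟨φ m, (hφu m).symm⟩
  have hrk : Module.finrank K (Submodule.map (φ.restrictScalars K)
      (LinearMap.range (Algebra.lsmul K K M u))) =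
      Module.finrank K (LinearMap.range (Algebra.lsmul K K M u)) :=
    (Submodule.equivMapOfInjective (φ.restrictScalars K) hφ _).finrank_eq.symm
  constructor
  · rintro ⟨s, hs1, hs2⟩
    have hsψ : ∀ c : K, ψ (s c) = c := fun c => LinearMap.congr_fun hs1 c
    have key : LinearMap.range (Algebra.lsmul K K E u) =
        Submodule.map (φ.restrictScalars K) (LinearMap.range (Algebra.lsmul K K M u)) := by
      refine le_antisymm ?_ hle
      rintro _ ⟨x, rfl⟩
      have hker : x - s (ψ x) ∈ LinearMap.ker ψ := by
        simp [LinearMap.mem_ker, map_sub, hsψ]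
      rw [← hex] at hker
      obtain ⟨m, hm⟩ := hker
      refine ⟨u • m, ⟨m, rfl⟩, ?_⟩
      have : (φ.restrictScalars K) (u • m) = u • (x - s (ψ x)) := by
        show φ (u • m) = _
        rw [hφu]
        exact congrArg (u • ·) hm
      rw [this, smul_sub, hs2, sub_zero]
      rfl
    rw [key, hrk]
  · intro h
    have heq : Submodule.map (φ.restrictScalars K)
        (LinearMap.range (Algebra.lsmul K K M u)) =
        LinearMap.range (Algebra.lsmul K K E u) :=
      Submodule.eq_of_le_of_finrank_le hle (by rw [hrk, ← h])
    obtain ⟨e, he⟩ := hψ 1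
    have hue : u • e ∈ Submodule.map (φ.restrictScalars K)
        (LinearMap.range (Algebra.lsmul K K M u)) := heq ▸ ⟨e, rfl⟩
    obtain ⟨_, ⟨m, rfl⟩, hm⟩ := hue
    have hm' : φ (u • m) = u • e := hm
    have hψφm : ψ (φ m) = 0 := by
      have : φ m ∈ LinearMap.ker ψ := hex ▸ ⟨m, rfl⟩
      exact this
    refine ⟨LinearMap.toSpanSingleton K E (e - φ m), ?_, ?_⟩
    · refine LinearMap.ext fun c => ?_
      simp [LinearMap.toSpanSingleton_apply, map_sub, he, hψφm]
    · intro c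
      rw [LinearMap.toSpanSingleton_apply, hcomm, smul_sub, ← hφu, hm', sub_self, smul_zero]
end

section
/- Let Θ be a component of the stable Auslander–Reiten quiver of a finite group scheme G over an algebraically closed field, and suppose there exist a function d_i(α) ≥ 0 on π-points (1 ≤ i ≤ p) and f(M) > 0 on modules in Θ such that the Jordan type of α^*(M) is sum_{i<p} d_i(α) f(M) [i] + (1/p)(dim M − d_p(α) f(M)) [p] for all π-points α and all M in Θ. Then for any two modules M, N in Θ, any j with 1 ≤ j ≤ p−1, and any two π-points α, β: rank(α(t)^j, M) > rank(β(t)^j, M) implies rank(α(t)^j, N) > rank(β(t)^j, N). In particular the non-maximal j-rank loci of M and N coincide. -/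
/-- The `j`-rank of a module in an AR-component, computed from Farnsteiner's
data: multiplicities `aᵢ = dᵢ(α)·f(M)` for `i < p` and
`a_p = (dim M - d_p(α)·f(M))/p`, giving
`rank = ∑_{j<i<p} dᵢ(α) f(M) (i - j) + (dim M - d_p(α) f(M))/p · (p - j)`. -/
noncomputable def arRank (p j : ℕ) (d : ℕ → ℚ) (f dimM : ℚ) : ℚ :=
  (∑ i ∈ Finset.Ico (j + 1) p, d i * f * ((i : ℚ) - j)) +
    (dimM - d p * f) / p * ((p : ℚ) - j)

lemma arRank_eq (p j : ℕ) (d : ℕ → ℚ) (f dimM : ℚ) :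
    arRank p j d f dimM =
      f * ((∑ i ∈ Finset.Ico (j + 1) p, d i * ((i : ℚ) - j)) -
        d p / p * ((p : ℚ) - j)) + dimM / p * ((p : ℚ) - j) := by
  unfold arRank
  rw [show (∑ i ∈ Finset.Ico (j + 1) p, d i * f * ((i : ℚ) - j))
      = f * ∑ i ∈ Finset.Ico (j + 1) p, d i * ((i : ℚ) - j) from by
    rw [Finset.mul_sum]; exact Finset.sum_congr rfl fun i _ => by ring]
  ring

/-- (the arithmetic core of the AR-component invariance of
non-maximal `j`-rank loci).  Given Farnsteiner's data `dᵢ(α) ≥ 0` for two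
π-points `α, β` and positive values `f(M), f(N)` for two modules `M, N` in the
same AR-component, if `rank(α(t)^j, M) > rank(β(t)^j, M)` then
`rank(α(t)^j, N) > rank(β(t)^j, N)`. -/
theorem statement14 (p : ℕ) (hp : p.Prime) (j : ℕ) (hj1 : 1 ≤ j) (hj2 : j ≤ p - 1)
    (dα dβ : ℕ → ℚ) (hdα : ∀ i, 0 ≤ dα i) (hdβ : ∀ i, 0 ≤ dβ i)
    (fM fN dimM dimN : ℚ) (hfM : 0 < fM) (hfN : 0 < fN)
    (h : arRank p j dβ fM dimM < arRank p j dα fM dimM) :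
    arRank p j dβ fN dimN < arRank p j dα fN dimN := by
  rw [arRank_eq, arRank_eq] at h ⊢
  have h' : fM * ((∑ i ∈ Finset.Ico (j + 1) p, dβ i * ((i : ℚ) - j)) -
        dβ p / p * ((p : ℚ) - j)) <
      fM * ((∑ i ∈ Finset.Ico (j + 1) p, dα i * ((i : ℚ) - j)) -
        dα p / p * ((p : ℚ) - j)) := by linarith
  have hg := (mul_lt_mul_iff_right₀ hfM).mp h'
  have := (mul_lt_mul_iff_right₀ hfN).mpr hg
  linarith
end
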